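/- Let S be a nonempty set and 𝒮 a δ-ring on S. Let G assign to each A ∈ 𝒮 a Borel measure G_A on ℝ with ∫_ℝ(1∧x²)G_A(dx) < ∞, such that A ↦ G_A(B) is finitely additive on 𝒮 for every Borel set B. Then for every A ∈ 𝒮, the supremum over all finite families of pairwise disjoint rectangles A_i × B_i (A_i ∈ 𝒮, A_i ⊆ A, B_i Borel) of ∑_{i∈I} ∫_{B_i}(1∧x²)G_{A_i}(dx) equals ∫_ℝ(1∧x²)G_A(dx). -/

import Mathlib

open MeasureTheory Set Filter Topology

/-- A δ-ring of subsets: nonempty, closed under finite unions, set differences,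
and countable intersections. -/
structure IsDeltaRing {T : Type*} (𝒜 : Set (Set T)) : Prop where
  nonempty : 𝒜.Nonempty
  union_mem : ∀ ⦃A B : Set T⦄, A ∈ 𝒜 → B ∈ 𝒜 → A ∪ B ∈ 𝒜
  diff_mem : ∀ ⦃A B : Set T⦄, A ∈ 𝒜 → B ∈ 𝒜 → A \ B ∈ 𝒜
  iInter_mem : ∀ A : ℕ → Set T, (∀ n, A n ∈ 𝒜) → (⋂ n, A n) ∈ 𝒜

/-- A real-valued signed measure on a δ-ring `𝒜`: it vanishes on `∅` and is σ-additive
(with unconditionally convergent series, captured by `HasSum`) on every sequence of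
pairwise disjoint members of `𝒜` whose union lies in `𝒜`. -/
def IsSignedMeasureOn {T : Type*} (𝒜 : Set (Set T)) (μ : Set T → ℝ) : Prop :=
  μ ∅ = 0 ∧ ∀ A : ℕ → Set T, (∀ n, A n ∈ 𝒜) → Pairwise (Function.onFun Disjoint A) →
    (⋃ n, A n) ∈ 𝒜 → HasSum (fun n => μ (A n)) (μ (⋃ n, A n))

/-- A finite (real-valued, countably additive) signed measure on the σ-algebra of a
measurable space. -/
def IsFiniteSignedMeasure {X : Type*} [MeasurableSpace X] (μ : Set X → ℝ) : Prop :=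
  μ ∅ = 0 ∧ ∀ B : ℕ → Set X, (∀ n, MeasurableSet (B n)) →
    Pairwise (Function.onFun Disjoint B) → HasSum (fun n => μ (B n)) (μ (⋃ n, B n))

/-- The set of sums `∑ i, |Q₀ (Aᵢ) (Bᵢ)|` over all finite families of pairwise disjoint
rectangles `Aᵢ × Bᵢ` with `Aᵢ ∈ 𝒜`, `Aᵢ ⊆ A`, `Bᵢ` measurable. -/
def RectSums {T X : Type*} [MeasurableSpace X] (𝒜 : Set (Set T))
    (Q₀ : Set T → Set X → ℝ) (A : Set T) : Set ℝ :=
  { r | ∃ (n : ℕ) (As : Fin n → Set T) (Bs : Fin n → Set X),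
      (∀ i, As i ∈ 𝒜 ∧ As i ⊆ A ∧ MeasurableSet (Bs i)) ∧
      (Pairwise fun i j => Disjoint (As i ×ˢ Bs i) (As j ×ˢ Bs j)) ∧
      r = ∑ i, |Q₀ (As i) (Bs i)| }

/-- A Borel set is bounded away from zero if it is disjoint from some interval
`(-r, r)`, `r > 0`. -/
def BoundedAwayFromZero (B : Set ℝ) : Prop := ∃ r > 0, ∀ x ∈ B, r ≤ |x|

/-- A quasi-Lévy type measure, presented as its Jordan pair `(ν⁺, ν⁻)`: two mutually
singular Borel measures on `ℝ` with no mass at `0`, finite on every Borel set bounded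
away from `0`, and with `∫ (1 ∧ x²) d(ν⁺ + ν⁻) < ∞`. -/
def IsQuasiLevyPair (νp νm : Measure ℝ) : Prop :=
  νp {0} = 0 ∧ νm {0} = 0 ∧ νp.MutuallySingular νm ∧
  (∀ r : ℝ, 0 < r → νp {x | r ≤ |x|} < ⊤ ∧ νm {x | r ≤ |x|} < ⊤) ∧
  ∫⁻ x, ENNReal.ofReal (min 1 (x ^ 2)) ∂(νp + νm) < ⊤

/-- `J(A, B) = ∫_B (1 ∧ x²) F_A(dx)` for the quasi-Lévy family `F_A = F_A⁺ - F_A⁻`. -/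
noncomputable def Jfun {S : Type*} (Fp Fm : Set S → Measure ℝ) (A : Set S) (B : Set ℝ) : ℝ :=
  (∫⁻ x in B, ENNReal.ofReal (min 1 (x ^ 2)) ∂(Fp A)).toReal -
  (∫⁻ x in B, ENNReal.ofReal (min 1 (x ^ 2)) ∂(Fm A)).toReal

/-- For a finitely additive family `A ↦ G_A` of Borel measures with
`∫ (1 ∧ x²) dG_A < ∞`, the supremum of `∑ᵢ ∫_{Bᵢ} (1 ∧ x²) dG_{Aᵢ}` over finite disjoint
rectangle families inside `A × ℝ` is exactly `∫_ℝ (1 ∧ x²) dG_A`; stated as: the latter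
is the least upper bound of the set of such sums. -/
theorem sup_rect_sums_eq_integral {S : Type*} [Nonempty S]
    (𝒮 : Set (Set S)) (h𝒮 : IsDeltaRing 𝒮)
    (G : Set S → Measure ℝ)
    (hint : ∀ A ∈ 𝒮, ∫⁻ x, ENNReal.ofReal (min 1 (x ^ 2)) ∂(G A) < ⊤)
    (hGadd : ∀ B : Set ℝ, MeasurableSet B →
      ∀ A₁ ∈ 𝒮, ∀ A₂ ∈ 𝒮, Disjoint A₁ A₂ → G (A₁ ∪ A₂) B = G A₁ B + G A₂ B) :
    ∀ A ∈ 𝒮,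
      IsLUB
        { r : ℝ | ∃ (n : ℕ) (As : Fin n → Set S) (Bs : Fin n → Set ℝ),
            (∀ i, As i ∈ 𝒮 ∧ As i ⊆ A ∧ MeasurableSet (Bs i)) ∧
            (Pairwise fun i j => Disjoint (As i ×ˢ Bs i) (As j ×ˢ Bs j)) ∧
            r = ∑ i, (∫⁻ x in Bs i, ENNReal.ofReal (min 1 (x ^ 2)) ∂(G (As i))).toReal }
        (∫⁻ x, ENNReal.ofReal (min 1 (x ^ 2)) ∂(G A)).toReal := by
  classical
  intro A hA
  set f : ℝ → ENNReal := fun x => ENNReal.ofReal (min 1 (x ^ 2)) with hfdef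
  -- basic δ-ring facts
  have hempty : (∅ : Set S) ∈ 𝒮 := by
    obtain ⟨E, hE⟩ := h𝒮.nonempty
    simpa using h𝒮.diff_mem hE hE
  have hinter : ∀ ⦃X Y : Set S⦄, X ∈ 𝒮 → Y ∈ 𝒮 → X ∩ Y ∈ 𝒮 := by
    intro X Y hX hY
    have h := h𝒮.diff_mem hX (h𝒮.diff_mem hX hY)
    have : X \ (X \ Y) = X ∩ Y := by
      ext x; simp only [Set.mem_diff, Set.mem_inter_iff, not_and, not_not]; tauto
    rwa [this] at h
  -- measure-level additivity
  have hGmeas : ∀ A₁ ∈ 𝒮, ∀ A₂ ∈ 𝒮, Disjoint A₁ A₂ → G (A₁ ∪ A₂) = G A₁ + G A₂ := by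
    intro A₁ h₁ A₂ h₂ hd
    refine Measure.ext fun B hB => ?_
    rw [Measure.add_apply]
    exact hGadd B hB A₁ h₁ A₂ h₂ hd
  set L : Set S → Set ℝ → ENNReal := fun A' B => ∫⁻ x in B, f x ∂(G A') with hLdef
  have Ladd : ∀ A₁ ∈ 𝒮, ∀ A₂ ∈ 𝒮, Disjoint A₁ A₂ → ∀ B,
      L (A₁ ∪ A₂) B = L A₁ B + L A₂ B := by
    intro A₁ h₁ A₂ h₂ hd B
    simp only [hLdef, hGmeas A₁ h₁ A₂ h₂ hd, Measure.restrict_add, lintegral_add_measure]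
  have Lfin : ∀ A' ∈ 𝒮, ∀ B, L A' B < ⊤ := by
    intro A' hA' B
    refine lt_of_le_of_lt ?_ (hint A' hA')
    exact lintegral_mono' Measure.restrict_le_self le_rfl
  have Lempty : ∀ B, L ∅ B = 0 := by
    have h0 : L ∅ univ = L ∅ univ + L ∅ univ := by
      have := Ladd ∅ hempty ∅ hempty (disjoint_bot_left) univ
      simpa using this
    have hfin : L ∅ univ ≠ ⊤ := (Lfin ∅ hempty univ).ne
    have h1 : L ∅ univ + 0 = L ∅ univ + L ∅ univ := by simpa using h0
    have h2 : (0 : ENNReal) = L ∅ univ := by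
      exact (ENNReal.add_right_inj hfin).mp h1
    intro B
    have hle : L ∅ B ≤ L ∅ univ :=
      lintegral_mono' (Measure.restrict_mono (subset_univ _) le_rfl) le_rfl
    exact le_antisymm (hle.trans_eq h2.symm) zero_le
  -- finite unions stay in 𝒮
  have hUnionMem : ∀ {ι : Type} (s : Finset ι) (D : ι → Set S),
      (∀ i ∈ s, D i ∈ 𝒮) → (⋃ i ∈ s, D i) ∈ 𝒮 := by
    intro ι s
    induction s using Finset.induction_on with
    | empty => intro D _; simpa using hempty
    | insert _ _ hnotmem ih =>
      intro D hD
      rw [Finset.set_biUnion_insert]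
      exact h𝒮.union_mem (hD _ (Finset.mem_insert_self _ _))
        (ih D fun i hi => hD i (Finset.mem_insert_of_mem hi))
  -- finite additivity of L
  have Lsum : ∀ {ι : Type} (s : Finset ι) (D : ι → Set S),
      (∀ i ∈ s, D i ∈ 𝒮) → (Set.PairwiseDisjoint ↑s D) → ∀ B,
      L (⋃ i ∈ s, D i) B = ∑ i ∈ s, L (D i) B := by
    intro ι s
    induction s using Finset.induction_on with
    | empty => intro D _ _ B; simpa using Lempty B
    | @insert a s hnotmem ih =>
      intro D hD hpd B
      have hdisj : Disjoint (D a) (⋃ i ∈ s, D i) := by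
        rw [Set.disjoint_iUnion₂_right]
        intro i hi
        exact hpd (Finset.mem_insert_self a s) (Finset.mem_insert_of_mem hi)
          (fun h => hnotmem (h ▸ hi))
      rw [Finset.set_biUnion_insert,
        Ladd (D a) (hD _ (Finset.mem_insert_self _ _))
          (⋃ i ∈ s, D i) (hUnionMem s D fun i hi => hD i (Finset.mem_insert_of_mem hi)) hdisj B,
        ih D (fun i hi => hD i (Finset.mem_insert_of_mem hi))
          (hpd.subset (by simp [Finset.coe_insert, Set.subset_insert])) B,
        Finset.sum_insert hnotmem]
  constructor
  · -- upper bound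
    rintro r ⟨n, As, Bs, hABs, hpair, rfl⟩
    -- atoms
    set C : Finset (Fin n) → Set S :=
      fun T => (A ∩ ⋂ i ∈ T, As i) \ ⋃ i ∈ Tᶜ, As i with hCdef
    have hCmem : ∀ (s : S) (T : Finset (Fin n)),
        s ∈ C T ↔ s ∈ A ∧ ∀ i, (i ∈ T ↔ s ∈ As i) := by
      intro s T
      simp only [hCdef, Set.mem_diff, Set.mem_inter_iff, Set.mem_iUnion, Set.mem_iInter,
        Finset.mem_compl, not_exists]
      constructor
      · rintro ⟨⟨h1, h2⟩, h3⟩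
        refine ⟨h1, fun i => ⟨h2 i, fun hs => ?_⟩⟩
        by_contra hT
        exact h3 i hT hs
      · rintro ⟨h1, h2⟩
        exact ⟨⟨h1, fun i hi => (h2 i).mp hi⟩, fun i hi hs => hi ((h2 i).mpr hs)⟩
    have hCS : ∀ T, C T ∈ 𝒮 := by
      intro T
      refine h𝒮.diff_mem ?_ (hUnionMem Tᶜ As fun i _ => (hABs i).1)
      have : ∀ T' : Finset (Fin n), A ∩ ⋂ i ∈ T', As i ∈ 𝒮 := by
        intro T'
        induction T' using Finset.induction_on with
        | empty => simpa using hA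
        | @insert a s hnotmem ih =>
          have : A ∩ ⋂ i ∈ insert a s, As i = (A ∩ ⋂ i ∈ s, As i) ∩ As a := by
            ext x
            simp only [Set.mem_inter_iff, Set.mem_iInter, Finset.mem_insert]
            constructor
            · rintro ⟨hxA, hI⟩
              exact ⟨⟨hxA, fun i hi => hI i (Or.inr hi)⟩, hI a (Or.inl rfl)⟩
            · rintro ⟨⟨hxA, hI⟩, ha⟩
              exact ⟨hxA, fun i hi => hi.elim (fun h => h ▸ ha) (hI i)⟩
          rw [this]
          exact hinter ih (hABs a).1
      exact this T
    have hCdisj : Set.PairwiseDisjoint (↑(Finset.univ : Finset (Finset (Fin n)))) C := by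
      intro T _ T' _ hTT'
      rw [Function.onFun, Set.disjoint_left]
      intro s hs hs'
      apply hTT'
      have h1 := (hCmem s T).mp hs
      have h2 := (hCmem s T').mp hs'
      ext i
      rw [h1.2 i, h2.2 i]
    have hCunion : ∀ i, As i = ⋃ T ∈ Finset.univ.filter (fun T => i ∈ T), C T := by
      intro i
      ext s
      simp only [Set.mem_iUnion, Finset.mem_filter, Finset.mem_univ, true_and]
      constructor
      · intro hs
        refine ⟨Finset.univ.filter (fun j => s ∈ As j), by simp [hs], ?_⟩
        rw [hCmem]
        exact ⟨(hABs i).2.1 hs, fun j => by simp⟩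
      · rintro ⟨T, hiT, hsT⟩
        exact ((hCmem s T).mp hsT).2 i |>.mp hiT
    have hAunion : A = ⋃ T ∈ (Finset.univ : Finset (Finset (Fin n))), C T := by
      ext s
      simp only [Set.mem_iUnion, Finset.mem_univ, true_and, exists_prop, exists_true_left]
      constructor
      · intro hs
        refine ⟨Finset.univ.filter (fun j => s ∈ As j), ?_⟩
        rw [hCmem]
        exact ⟨hs, fun j => by simp⟩
      · rintro ⟨T, hsT⟩
        exact ((hCmem s T).mp hsT).1
    -- the key chain of (in)equalities in ENNReal
    have key : ∑ i, L (As i) (Bs i) ≤ L A univ := by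
      have step1 : ∀ i, L (As i) (Bs i)
          = ∑ T ∈ Finset.univ.filter (fun T => i ∈ T), L (C T) (Bs i) := by
        intro i
        rw [← Lsum _ C (fun T _ => hCS T)
          (hCdisj.subset (by intro T hT; simp)) (Bs i), ← hCunion i]
      calc ∑ i, L (As i) (Bs i)
          = ∑ i, ∑ T ∈ Finset.univ.filter (fun T => i ∈ T), L (C T) (Bs i) := by
            exact Finset.sum_congr rfl fun i _ => step1 i
        _ = ∑ T : Finset (Fin n), ∑ i ∈ T, L (C T) (Bs i) := by
            simp_rw [Finset.sum_filter]
            rw [Finset.sum_comm]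
            refine Finset.sum_congr rfl fun T _ => ?_
            rw [Finset.sum_ite_mem, Finset.univ_inter]
        _ ≤ ∑ T : Finset (Fin n), L (C T) univ := by
            refine Finset.sum_le_sum fun T _ => ?_
            rcases Set.eq_empty_or_nonempty (C T) with hCe | ⟨s₀, hs₀⟩
            · simp [hCe, Lempty]
            · -- the Bs i, i ∈ T, are pairwise disjoint
              have hBdisj : Set.PairwiseDisjoint (↑T) Bs := by
                intro i hi j hj hij
                rw [Function.onFun, Set.disjoint_left]
                intro x hxi hxj
                have hsi : s₀ ∈ As i := ((hCmem s₀ T).mp hs₀).2 i |>.mp hi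
                have hsj : s₀ ∈ As j := ((hCmem s₀ T).mp hs₀).2 j |>.mp hj
                exact Set.disjoint_left.mp (hpair hij)
                  (Set.mk_mem_prod hsi hxi) (Set.mk_mem_prod hsj hxj)
              have := lintegral_biUnion_finset (μ := G (C T)) (f := f) hBdisj
                (fun i _ => (hABs i).2.2)
              calc ∑ i ∈ T, L (C T) (Bs i) = L (C T) (⋃ i ∈ T, Bs i) := this.symm
                _ ≤ L (C T) univ := lintegral_mono_set (subset_univ _)
        _ = L A univ := by
            rw [← Lsum Finset.univ C (fun T _ => hCS T) hCdisj univ, ← hAunion]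
    -- pass to toReal
    have hfinI : ∀ i ∈ (Finset.univ : Finset (Fin n)), L (As i) (Bs i) ≠ ⊤ :=
      fun i _ => (Lfin (As i) (hABs i).1 (Bs i)).ne
    have hLA : L A univ = ∫⁻ x, f x ∂(G A) := by simp [hLdef]
    calc ∑ i, (L (As i) (Bs i)).toReal = (∑ i, L (As i) (Bs i)).toReal :=
          (ENNReal.toReal_sum hfinI).symm
      _ ≤ (L A univ).toReal := ENNReal.toReal_mono (hLA ▸ (hint A hA).ne) key
      _ = (∫⁻ x, f x ∂(G A)).toReal := by rw [hLA]
  · -- least upper bound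
    intro b hb
    refine hb ⟨1, fun _ => A, fun _ => univ, fun i => ⟨hA, subset_rfl, MeasurableSet.univ⟩,
      ?_, ?_⟩
    · intro i j hij
      exact absurd (Subsingleton.elim i j) hij
    · simp
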